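/- Let u¹, u² : ℝ × ℝ → ℝ be smooth functions of (x, t) satisfying the dispersionless limit of the first positive Ablowitz–Ladik flow: ∂ₜu¹ = u¹∂ₓu² and ∂ₜu² = u²(2∂ₓu² − ∂ₓu¹). Then v¹ = u² − u¹ and v² = log u² (assuming u² > 0) satisfy ∂ₜv¹ = ∂ₓ(v¹e^{v²}) and ∂ₜv² = ∂ₓ(e^{v²} + v¹); that is, (v¹, v²) solves the flow ∂v^α/∂t^{2,0} = Σ_{β} η^{αβ}∂ₓ(∂θ_{2,1}/∂v^β) of the Principal Hierarchy of the generalized Frobenius manifold with θ_{2,1} = v¹e^{v²} + ½(v¹)² and η^{12} = η^{21} = 1, η^{11} = η^{22} = 0. -/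

import Mathlib

lemma slice_t_diff {u : ℝ → ℝ → ℝ} (h : ContDiff ℝ (⊤ : ℕ∞) (Function.uncurry u))
    (x t : ℝ) : DifferentiableAt ℝ (fun s => u x s) t :=
  (h.differentiable (by simp) (x, t)).comp t
    (DifferentiableAt.prodMk (differentiableAt_const x) differentiableAt_id)

lemma slice_x_diff {u : ℝ → ℝ → ℝ} (h : ContDiff ℝ (⊤ : ℕ∞) (Function.uncurry u))
    (x t : ℝ) : DifferentiableAt ℝ (fun y => u y t) x :=
  show DifferentiableAt ℝ (Function.uncurry u ∘ fun y : ℝ => (y, t)) x from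
  (h.differentiable (by simp) (x, t)).comp x
    (DifferentiableAt.prodMk differentiableAt_fun_id (differentiableAt_const t))

/-- If `u¹, u²` solve the dispersionless limit
`∂ₜu¹ = u¹∂ₓu²`, `∂ₜu² = u²(2∂ₓu² − ∂ₓu¹)` of the first positive Ablowitz–Ladik flow,
then `v¹ = u² − u¹`, `v² = log u²` solve `∂ₜv¹ = ∂ₓ(v¹e^{v²})`,
`∂ₜv² = ∂ₓ(e^{v²} + v¹)`, i.e. `(v¹, v²)` solves the flow
`∂v^α/∂t^{2,0} = Σ_β η^{αβ}∂ₓ(∂θ_{2,1}/∂v^β)` of the Principal Hierarchy of the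
generalized Frobenius manifold, with `θ_{2,1} = v¹e^{v²} + ½(v¹)²`. -/
theorem dispersionless_flow_to_principal_hierarchy
    (u1 u2 : ℝ → ℝ → ℝ)
    (hu1 : ContDiff ℝ (⊤ : ℕ∞) (Function.uncurry u1))
    (hu2 : ContDiff ℝ (⊤ : ℕ∞) (Function.uncurry u2))
    (hu2pos : ∀ x t : ℝ, u2 x t > 0)
    (hflow1 : ∀ x t : ℝ,
      deriv (fun s => u1 x s) t = u1 x t * deriv (fun y => u2 y t) x)
    (hflow2 : ∀ x t : ℝ,
      deriv (fun s => u2 x s) t =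
        u2 x t * (2 * deriv (fun y => u2 y t) x - deriv (fun y => u1 y t) x))
    (v1 v2 : ℝ → ℝ → ℝ)
    (hv1 : ∀ x t : ℝ, v1 x t = u2 x t - u1 x t)
    (hv2 : ∀ x t : ℝ, v2 x t = Real.log (u2 x t)) :
    ∀ x t : ℝ,
      deriv (fun s => v1 x s) t =
        deriv (fun y => v1 y t * Real.exp (v2 y t)) x ∧
      deriv (fun s => v2 x s) t =
        deriv (fun y => Real.exp (v2 y t) + v1 y t) x := by
  intro x t
  have hU1t := slice_t_diff hu1 x t
  have hU2t := slice_t_diff hu2 x t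
  have hU1x := slice_x_diff hu1 x t
  have hU2x := slice_x_diff hu2 x t
  have hexp : ∀ y s : ℝ, Real.exp (v2 y s) = u2 y s := fun y s => by
    rw [hv2]; exact Real.exp_log (hu2pos y s)
  constructor
  · have e1 : (fun s => v1 x s) = fun s => u2 x s - u1 x s := funext fun s => hv1 x s
    have e2 : (fun y => v1 y t * Real.exp (v2 y t)) =
        fun y => (u2 y t - u1 y t) * u2 y t := funext fun y => by rw [hv1, hexp]
    rw [e1, e2, deriv_fun_sub hU2t hU1t, hflow1, hflow2,
      deriv_fun_mul (c := fun y => u2 y t - u1 y t) (hU2x.sub hU1x) hU2x, deriv_fun_sub hU2x hU1x]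
    ring
  · have e1 : (fun s => v2 x s) = fun s => Real.log (u2 x s) := funext fun s => hv2 x s
    have e2 : (fun y => Real.exp (v2 y t) + v1 y t) =
        fun y => u2 y t + (u2 y t - u1 y t) := funext fun y => by rw [hv1, hexp]
    have hlog : HasDerivAt (fun s => Real.log (u2 x s))
        ((u2 x t)⁻¹ * deriv (fun s => u2 x s) t) t :=
      (Real.hasDerivAt_log (hu2pos x t).ne').comp t hU2t.hasDerivAt
    rw [e1, e2, hlog.deriv, hflow2, deriv_fun_add (g := fun y => u2 y t - u1 y t) hU2x (hU2x.sub hU1x),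
      deriv_fun_sub hU2x hU1x]
    field_simp [(hu2pos x t).ne']
    ring
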